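/- arXiv:2207.02794 — 4 statements merged into one kernel-verified Lean document; each statement's English description precedes it below -/
import Mathlib

section
/- Let M, M′ be d×d positive semidefinite Hermitian matrices that are neighbors, i.e., M′ = M − uu* + vv* for some u, v ∈ ℂ^d with ‖u‖₂ ≤ 1 and ‖v‖₂ ≤ 1. Then the ℓ¹ distance between their sorted eigenvalue vectors satisfies Σ_{i=1}^d |λ_i(M) − λ_i(M′)| ≤ 2. -/
open Matrix
open scoped ComplexOrder InnerProductSpace



variable {d : ℕ} {A B : Matrix (Fin d) (Fin d) ℂ}

lemma toEuclideanLin_eigenBasis (hA : A.IsHermitian) (j : Fin d) :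
    Matrix.toEuclideanLin A (hA.eigenvectorBasis j) =
      (hA.eigenvalues j : ℂ) • hA.eigenvectorBasis j := by
  have h := hA.mulVec_eigenvectorBasis j
  apply (WithLp.equiv 2 _).injective
  simpa [Matrix.toEuclideanLin_apply, Complex.real_smul] using congrArg (fun w => w) h

lemma inner_toEuclideanLin_eq (hA : A.IsHermitian) (x : EuclideanSpace ℂ (Fin d)) :
    ⟪x, Matrix.toEuclideanLin A x⟫_ℂ =
      ∑ j, (hA.eigenvalues j : ℂ) * (‖hA.eigenvectorBasis.repr x j‖ ^ 2 : ℝ) := by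
  set e := hA.eigenvectorBasis
  have hx : Matrix.toEuclideanLin A x
      = ∑ j, e.repr x j • ((hA.eigenvalues j : ℂ) • e j) := by
    conv_lhs => rw [← e.sum_repr x]
    rw [map_sum]
    simp only [map_smul]
    exact Finset.sum_congr rfl fun j _ => congrArg _ (toEuclideanLin_eigenBasis hA j)
  rw [hx, inner_sum]
  refine Finset.sum_congr rfl fun j _ => ?_
  rw [inner_smul_right, inner_smul_right, ← inner_conj_symm, e.repr_apply_apply]
  have : ⟪e j, x⟫_ℂ * (starRingEnd ℂ) ⟪e j, x⟫_ℂ = ((‖⟪e j, x⟫_ℂ‖:ℂ) ^ 2) := Complex.mul_conj' _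
  push_cast
  linear_combination (hA.eigenvalues j : ℂ) * this

lemma re_inner_toEuclideanLin (hA : A.IsHermitian) (x : EuclideanSpace ℂ (Fin d)) :
    (⟪x, Matrix.toEuclideanLin A x⟫_ℂ).re =
      ∑ j, hA.eigenvalues j * ‖hA.eigenvectorBasis.repr x j‖ ^ 2 := by
  rw [inner_toEuclideanLin_eq hA x, Complex.re_sum]
  refine Finset.sum_congr rfl fun j _ => ?_
  rw [← Complex.ofReal_mul, Complex.ofReal_re]

lemma norm_sq_eq_sum_repr (e : OrthonormalBasis (Fin d) ℂ (EuclideanSpace ℂ (Fin d)))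
    (x : EuclideanSpace ℂ (Fin d)) : ‖x‖ ^ 2 = ∑ j, ‖e.repr x j‖ ^ 2 := by
  rw [← e.repr.norm_map x, EuclideanSpace.norm_eq, Real.sq_sqrt (by positivity)]

lemma repr_eq_zero_of_mem_span (e : OrthonormalBasis (Fin d) ℂ (EuclideanSpace ℂ (Fin d)))
    (s : Set (Fin d)) {x : EuclideanSpace ℂ (Fin d)}
    (hx : x ∈ Submodule.span ℂ (e '' s)) {j : Fin d} (hj : j ∉ s) : e.repr x j = 0 := by
  rw [e.repr_apply_apply]
  have hle : Submodule.span ℂ (e '' s) ≤ LinearMap.ker (innerSL ℂ (e j)).toLinearMap := by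
    rw [Submodule.span_le]
    rintro _ ⟨k, hk, rfl⟩
    have hjk : j ≠ k := fun h => hj (h ▸ hk)
    simpa [LinearMap.mem_ker] using e.orthonormal.2 hjk
  exact hle hx

lemma re_inner_le_of_posSemidef (h : (B - A).PosSemidef) (x : EuclideanSpace ℂ (Fin d)) :
    (⟪x, Matrix.toEuclideanLin A x⟫_ℂ).re ≤ (⟪x, Matrix.toEuclideanLin B x⟫_ℂ).re := by
  have key : ∀ C : Matrix (Fin d) (Fin d) ℂ, ⟪x, Matrix.toEuclideanLin C x⟫_ℂ =
      dotProduct (star (WithLp.equiv 2 _ x)) (C *ᵥ (WithLp.equiv 2 _ x)) := by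
    intro C
    rw [EuclideanSpace.inner_eq_star_dotProduct, dotProduct_comm]
    rfl
  have h0 := h.dotProduct_mulVec_nonneg (WithLp.equiv 2 _ x)
  have hre : 0 ≤ (dotProduct (star (WithLp.equiv 2 _ x))
      ((B - A) *ᵥ (WithLp.equiv 2 _ x))).re := (Complex.le_def.mp h0).1
  rw [Matrix.sub_mulVec, dotProduct_sub, Complex.sub_re] at hre
  rw [key A, key B]
  linarith

lemma finrank_span_obasis_image (e : OrthonormalBasis (Fin d) ℂ (EuclideanSpace ℂ (Fin d)))
    (s : Finset (Fin d)) :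
    Module.finrank ℂ (Submodule.span ℂ (e '' (s : Set (Fin d)))) = s.card := by
  have hli : LinearIndependent ℂ (fun j : {j // j ∈ s} => e j) :=
    (e.orthonormal.linearIndependent).comp _ Subtype.val_injective
  have hr : Set.range (fun j : {j // j ∈ s} => e j) = e '' (s : Set (Fin d)) := by
    ext y
    simp [Set.mem_image, Set.range_comp]
  rw [← hr, finrank_span_eq_card hli, Fintype.card_coe]

lemma eigenvalues_mono {A B : Matrix (Fin d) (Fin d) ℂ}
    (hA : A.IsHermitian) (hB : B.IsHermitian) (hBA : (B - A).PosSemidef)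
    {f g : Fin d → ℝ} (hf : Antitone f) (hg : Antitone g)
    (σ τ : Equiv.Perm (Fin d)) (hfσ : f = hA.eigenvalues ∘ σ) (hgτ : g = hB.eigenvalues ∘ τ)
    (i : Fin d) : f i ≤ g i := by
  classical
  set eA := hA.eigenvectorBasis with heA
  set eB := hB.eigenvectorBasis with heB
  set sU : Finset (Fin d) := (Finset.Iic i).image σ with hsU
  set sV : Finset (Fin d) := (Finset.Ici i).image τ with hsV
  set U : Submodule ℂ (EuclideanSpace ℂ (Fin d)) :=
    Submodule.span ℂ (eA '' (sU : Set (Fin d))) with hUdef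
  set V : Submodule ℂ (EuclideanSpace ℂ (Fin d)) :=
    Submodule.span ℂ (eB '' (sV : Set (Fin d))) with hVdef
  have hU : Module.finrank ℂ U = (i : ℕ) + 1 := by
    rw [hUdef, finrank_span_obasis_image, hsU,
      Finset.card_image_of_injective _ σ.injective, Fin.card_Iic]
  have hV : Module.finrank ℂ V = d - (i : ℕ) := by
    rw [hVdef, finrank_span_obasis_image, hsV,
      Finset.card_image_of_injective _ τ.injective, Fin.card_Ici]
  -- U ⊓ V contains a nonzero vector
  have hsum := Submodule.finrank_sup_add_finrank_inf_eq U V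
  have htop : Module.finrank ℂ (U ⊔ V : Submodule ℂ (EuclideanSpace ℂ (Fin d))) ≤ d := by
    refine le_trans (Submodule.finrank_le _) ?_
    simp
  have hid : (i : ℕ) < d := i.isLt
  have hpos : 0 < Module.finrank ℂ (U ⊓ V : Submodule ℂ (EuclideanSpace ℂ (Fin d))) := by
    omega
  obtain ⟨⟨x, hxUV⟩, hxne⟩ := Module.finrank_pos_iff_exists_ne_zero.mp hpos
  have hxU : x ∈ U := hxUV.1
  have hxV : x ∈ V := hxUV.2
  have hx0 : x ≠ 0 := fun h => hxne (Subtype.ext h)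
  have hnx : (0:ℝ) < ‖x‖ ^ 2 := by
    have := norm_pos_iff.mpr hx0
    positivity
  -- lower bound for A
  have hlow : f i * ‖x‖ ^ 2 ≤ (⟪x, Matrix.toEuclideanLin A x⟫_ℂ).re := by
    rw [re_inner_toEuclideanLin hA, norm_sq_eq_sum_repr eA, Finset.mul_sum]
    refine Finset.sum_le_sum fun k _ => ?_
    by_cases hk : eA.repr x k = 0
    · rw [heA] at hk ⊢; simp [hk]
    · have hks : k ∈ (sU : Set (Fin d)) := by
        by_contra hns
        exact hk (repr_eq_zero_of_mem_span eA _ hxU hns)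
      rw [Finset.mem_coe, hsU, Finset.mem_image] at hks
      obtain ⟨j, hj, rfl⟩ := hks
      rw [Finset.mem_Iic] at hj
      have : f i ≤ f j := hf hj
      have hfj : f j = hA.eigenvalues (σ j) := by rw [hfσ]; rfl
      nlinarith [sq_nonneg ‖eA.repr x (σ j)‖]
  -- upper bound for B
  have hup : (⟪x, Matrix.toEuclideanLin B x⟫_ℂ).re ≤ g i * ‖x‖ ^ 2 := by
    rw [re_inner_toEuclideanLin hB, norm_sq_eq_sum_repr eB, Finset.mul_sum]
    refine Finset.sum_le_sum fun k _ => ?_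
    by_cases hk : eB.repr x k = 0
    · rw [heB] at hk ⊢; simp [hk]
    · have hks : k ∈ (sV : Set (Fin d)) := by
        by_contra hns
        exact hk (repr_eq_zero_of_mem_span eB _ hxV hns)
      rw [Finset.mem_coe, hsV, Finset.mem_image] at hks
      obtain ⟨j, hj, rfl⟩ := hks
      rw [Finset.mem_Ici] at hj
      have : g j ≤ g i := hg hj
      have hgj : g j = hB.eigenvalues (τ j) := by rw [hgτ]; rfl
      nlinarith [sq_nonneg ‖eB.repr x (τ j)‖]
  have hmid := re_inner_le_of_posSemidef hBA x
  have := hlow.trans (hmid.trans hup)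
  exact le_of_mul_le_mul_right (by linarith) hnx

lemma posSemidef_outer (w : Fin d → ℂ) : (Matrix.vecMulVec w (star w)).PosSemidef := by
  rw [Matrix.vecMulVec_eq (Fin 1), ← Matrix.conjTranspose_replicateCol]
  exact Matrix.posSemidef_self_mul_conjTranspose _

lemma trace_eq_sum_eigenvalues (hA : A.IsHermitian) :
    A.trace = ∑ i, (hA.eigenvalues i : ℂ) := by
  conv_lhs => rw [hA.spectral_theorem]
  rw [Unitary.conjStarAlgAut_apply, Matrix.trace_mul_cycle]
  have h1 : (star (hA.eigenvectorUnitary : Matrix (Fin d) (Fin d) ℂ)) *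
      (hA.eigenvectorUnitary : Matrix (Fin d) (Fin d) ℂ) = 1 :=
    Unitary.coe_star_mul_self _
  rw [h1, Matrix.one_mul, Matrix.trace_diagonal]
  rfl

lemma trace_outer_re (w : EuclideanSpace ℂ (Fin d)) :
    ((Matrix.vecMulVec (w : Fin d → ℂ) (star (w : Fin d → ℂ))).trace).re = ‖w‖ ^ 2 := by
  have h : ‖w‖ ^ 2 = ∑ i, ‖(w : Fin d → ℂ) i‖ ^ 2 := by
    rw [EuclideanSpace.norm_eq, Real.sq_sqrt (by positivity)]
  rw [h, Matrix.trace, Complex.re_sum]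
  refine Finset.sum_congr rfl fun i _ => ?_
  simp [Matrix.diag, Matrix.vecMulVec_apply, Pi.star_apply, Complex.mul_conj',
    ← Complex.ofReal_pow]

lemma exists_antitone_perm (ev : Fin d → ℝ) : ∃ ρ : Equiv.Perm (Fin d), Antitone (ev ∘ ρ) := by
  refine ⟨Fin.revPerm.trans (Tuple.sort ev), fun a b hab => ?_⟩
  exact Tuple.monotone_sort ev (Fin.rev_le_rev.mpr hab)

/-- If `M` and `M′ = M − uu* + vv*` are neighboring PSD Hermitian matrices with
`‖u‖₂ ≤ 1`, `‖v‖₂ ≤ 1`, then the ℓ¹ distance between their sorted eigenvalue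
vectors is at most `2`. Here `f` and `g` are the eigenvalues of `M` and `M′`
respectively, listed in nonincreasing order. -/
theorem eigenvalue_l1_distance_neighbors {d : ℕ}
    {M M' : Matrix (Fin d) (Fin d) ℂ}
    (hM : M.PosSemidef) (hM' : M'.PosSemidef)
    (u v : EuclideanSpace ℂ (Fin d)) (hu : ‖u‖ ≤ 1) (hv : ‖v‖ ≤ 1)
    (hnbr : M' = M - Matrix.vecMulVec (u : Fin d → ℂ) (star (u : Fin d → ℂ))
      + Matrix.vecMulVec (v : Fin d → ℂ) (star (v : Fin d → ℂ)))
    (f g : Fin d → ℝ) (hf : Antitone f) (hg : Antitone g)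
    (σ τ : Equiv.Perm (Fin d))
    (hfσ : f = hM.isHermitian.eigenvalues ∘ σ)
    (hgτ : g = hM'.isHermitian.eigenvalues ∘ τ) :
    ∑ i, |f i - g i| ≤ 2 := by

  classical
  set P := Matrix.vecMulVec (u : Fin d → ℂ) (star (u : Fin d → ℂ)) with hP
  set Q := Matrix.vecMulVec (v : Fin d → ℂ) (star (v : Fin d → ℂ)) with hQ
  have hPpsd : P.PosSemidef := posSemidef_outer _
  have hQpsd : Q.PosSemidef := posSemidef_outer _
  set A := M - P with hAdef
  have hA : A.IsHermitian := hM.isHermitian.sub hPpsd.1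
  obtain ⟨ρ, hρ⟩ := exists_antitone_perm hA.eigenvalues
  set h := hA.eigenvalues ∘ ρ with hhdef
  have hMA : (M - A).PosSemidef := by
    have : M - A = P := by rw [hAdef]; abel
    rw [this]; exact hPpsd
  have hM'A : (M' - A).PosSemidef := by
    have : M' - A = Q := by rw [hnbr, hAdef]; abel
    rw [this]; exact hQpsd
  have hhf : ∀ i, h i ≤ f i := fun i =>
    eigenvalues_mono hA hM.isHermitian hMA hρ hf ρ σ rfl hfσ i
  have hhg : ∀ i, h i ≤ g i := fun i =>
    eigenvalues_mono hA hM'.isHermitian hM'A hρ hg ρ τ rfl hgτ i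
  -- sums of sorted eigenvalues equal real parts of traces
  have retr : ∀ (C : Matrix (Fin d) (Fin d) ℂ) (hC : C.IsHermitian),
      ∑ i, hC.eigenvalues i = C.trace.re := by
    intro C hC
    have h1 := congrArg Complex.re (trace_eq_sum_eigenvalues hC)
    rw [Complex.re_sum] at h1
    simp only [Complex.ofReal_re] at h1
    exact h1.symm
  have hsf : ∑ i, f i = M.trace.re := by
    rw [hfσ, ← retr M hM.isHermitian]; exact Equiv.sum_comp σ _
  have hsg : ∑ i, g i = M'.trace.re := by
    rw [hgτ, ← retr M' hM'.isHermitian]; exact Equiv.sum_comp τ _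
  have hsh : ∑ i, h i = A.trace.re := by
    rw [hhdef, ← retr A hA]; exact Equiv.sum_comp ρ _
  have hMAtr : M.trace.re - A.trace.re = ‖u‖ ^ 2 := by
    have : M.trace - A.trace = P.trace := by
      rw [hAdef, Matrix.trace_sub]; ring
    have h2 := congrArg Complex.re this
    rw [Complex.sub_re] at h2
    rw [h2, hP, trace_outer_re]
  have hM'Atr : M'.trace.re - A.trace.re = ‖v‖ ^ 2 := by
    have : M'.trace - A.trace = Q.trace := by
      rw [hnbr, hAdef, Matrix.trace_add, Matrix.trace_sub]; ring
    have h2 := congrArg Complex.re this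
    rw [Complex.sub_re] at h2
    rw [h2, hQ, trace_outer_re]
  have hu2 : ‖u‖ ^ 2 ≤ 1 := pow_le_one₀ (norm_nonneg u) hu
  have hv2 : ‖v‖ ^ 2 ≤ 1 := pow_le_one₀ (norm_nonneg v) hv
  calc ∑ i, |f i - g i| ≤ ∑ i, ((f i - h i) + (g i - h i)) := by
        refine Finset.sum_le_sum fun i _ => abs_sub_le_iff.mpr ⟨?_, ?_⟩
        · have := hhg i; linarith
        · have := hhf i; linarith
    _ = (∑ i, f i - ∑ i, h i) + (∑ i, g i - ∑ i, h i) := by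
        rw [Finset.sum_add_distrib, Finset.sum_sub_distrib, Finset.sum_sub_distrib]
    _ ≤ 2 := by rw [hsf, hsg, hsh]; linarith
end

section
/- Let Λ = diag(λ₁,…,λ_k,0,…,0) be a d×d diagonal PSD matrix with λ₁ ≥ ⋯ ≥ λ_k > 0, and let O_Λ = {UΛU* : U ∈ U(d)} be its unitary orbit. Then for every ζ > 0, the covering number of O_Λ with respect to the spectral norm satisfies N(O_Λ, ‖·‖₂, ζ) ≤ (1 + 8λ₁/ζ)^{2dk}. -/
open Matrix

/-- The spectral (ℓ²→ℓ² operator) norm of a complex matrix. -/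
noncomputable def opNorm {m n : ℕ} (X : Matrix (Fin m) (Fin n) ℂ) : ℝ :=
  ‖LinearMap.toContinuousLinearMap (Matrix.toEuclideanLin X)‖

/-- `C` is a `ζ`-covering of `S` for the distance `dist`: the centers lie in `S` and every
point of `S` is within distance `ζ` of some center. -/
def IsCover {α : Type*} (dist : α → α → ℝ) (S : Set α) (ζ : ℝ) (C : Finset α) : Prop :=
  ↑C ⊆ S ∧ ∀ x ∈ S, ∃ c ∈ C, dist x c ≤ ζ

open Metric MeasureTheory Module Set
open scoped ENNReal
open scoped Matrix.Norms.L2Operator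

section Net

variable {E : Type*} [NormedAddCommGroup E] [NormedSpace ℝ E] [FiniteDimensional ℝ E]

/-- Volume argument: a `δ`-separated subset of the unit ball has cardinality at most
`(1 + 2/δ) ^ dim`. -/
theorem sep_card_le {δ : ℝ} (hδ : 0 < δ) (s : Finset E) (hs : ∀ c ∈ s, ‖c‖ ≤ 1)
    (h : ∀ c ∈ s, ∀ d ∈ s, c ≠ d → δ ≤ ‖c - d‖) :
    (s.card : ℝ) ≤ (1 + 2 / δ) ^ finrank ℝ E := by
  borelize E
  let μ : Measure E := Measure.addHaar
  have hδ2 : 0 < δ / 2 := by linarith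
  have hρ : (0:ℝ) < 1 + δ / 2 := by linarith
  set A := ⋃ c ∈ s, ball (c : E) (δ/2) with hA
  have D : Set.Pairwise (s : Set E) (Function.onFun Disjoint fun c => ball (c : E) (δ/2)) := by
    rintro c hc d hd hcd
    apply ball_disjoint_ball
    rw [dist_eq_norm]
    have := h c hc d hd hcd
    linarith
  have A_subset : A ⊆ ball (0 : E) (1 + δ/2) := by
    refine Set.iUnion₂_subset fun x hx => ?_
    apply ball_subset_ball'
    rw [dist_zero_right]
    have := hs x hx; linarith
  have I :
      (s.card : ℝ≥0∞) * ENNReal.ofReal ((δ/2) ^ finrank ℝ E) * μ (ball 0 1) ≤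
        ENNReal.ofReal ((1 + δ/2) ^ finrank ℝ E) * μ (ball 0 1) := calc
    (s.card : ℝ≥0∞) * ENNReal.ofReal ((δ/2) ^ finrank ℝ E) * μ (ball 0 1) = μ A := by
        rw [hA, measure_biUnion_finset D fun c _ => measurableSet_ball]
        simp only [μ.addHaar_ball_of_pos _ hδ2, Finset.sum_const, nsmul_eq_mul, mul_assoc]
    _ ≤ μ (ball (0 : E) (1 + δ/2)) := measure_mono A_subset
    _ = _ := by simp only [μ.addHaar_ball_of_pos _ hρ]
  have J : (s.card : ℝ≥0∞) * ENNReal.ofReal ((δ/2) ^ finrank ℝ E) ≤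
      ENNReal.ofReal ((1 + δ/2) ^ finrank ℝ E) :=
    (ENNReal.mul_le_mul_iff_left (measure_ball_pos _ _ zero_lt_one).ne' measure_ball_lt_top.ne).1 I
  have K := ENNReal.toReal_le_of_le_ofReal (pow_nonneg hρ.le _) J
  have K2 : (s.card : ℝ) * (δ/2) ^ finrank ℝ E ≤ (1 + δ/2) ^ finrank ℝ E := by
    simpa [ENNReal.toReal_mul, ENNReal.toReal_ofReal (pow_nonneg hδ2.le _)] using K
  have hpow : (0:ℝ) < (δ/2) ^ finrank ℝ E := pow_pos hδ2 _
  rw [show (1 + 2/δ : ℝ) = (1 + δ/2) / (δ/2) by field_simp; ring, div_pow,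
    le_div_iff₀ hpow]
  exact K2

/-- Existence of a `δ`-net of the unit ball of cardinality at most `(1 + 2/δ) ^ dim`. -/
theorem exists_net (δ : ℝ) (hδ : 0 < δ) :
    ∃ C : Finset E, ↑C ⊆ closedBall (0:E) 1 ∧
      (∀ x ∈ closedBall (0:E) 1, ∃ c ∈ C, dist x c ≤ δ) ∧
      (C.card : ℝ) ≤ (1 + 2 / δ) ^ finrank ℝ E := by
  classical
  set P : Finset E → Prop := fun C => (↑C ⊆ closedBall (0:E) 1) ∧
      ∀ c ∈ C, ∀ d ∈ C, c ≠ d → δ ≤ ‖c - d‖ with hP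
  have key : ∀ C, P C → (C.card : ℝ) ≤ (1 + 2/δ) ^ finrank ℝ E := fun C hC =>
    sep_card_le hδ C (fun c hc => by
      have := hC.1 hc; rwa [mem_closedBall, dist_zero_right] at this) hC.2
  set Q : Set ℕ := {n : ℕ | ∃ C, P C ∧ C.card = n} with hQ
  have bddQ : BddAbove Q := by
    refine ⟨⌈(1 + 2/δ) ^ finrank ℝ E⌉₊, fun n hn => ?_⟩
    obtain ⟨C, hC, rfl⟩ := hn
    exact_mod_cast le_trans (key C hC) (Nat.le_ceil _)
  have neQ : Q.Nonempty := ⟨0, ∅, ⟨by simp, by simp⟩, by simp⟩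
  obtain ⟨C, hC, hcard⟩ : ∃ C, P C ∧ C.card = sSup Q := Nat.sSup_mem neQ bddQ
  refine ⟨C, hC.1, ?_, key C hC⟩
  intro x hx
  by_contra hcon
  push_neg at hcon
  have hxC : x ∉ C := fun hxmem => by
    have := hcon x hxmem
    simp only [dist_self] at this
    linarith
  have hPins : P (insert x C) := by
    constructor
    · intro y hy
      rcases Finset.mem_insert.1 (by exact_mod_cast hy) with rfl | h
      · exact hx
      · exact hC.1 h
    · intro c hc d hd hne
      rcases Finset.mem_insert.1 hc with rfl | hc' <;>
        rcases Finset.mem_insert.1 hd with rfl | hd'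
      · exact absurd rfl hne
      · have := hcon d hd'; rw [dist_eq_norm] at this; linarith
      · have := hcon c hc'; rw [dist_eq_norm, ← norm_sub_rev] at this; linarith
      · exact hC.2 c hc' d hd' hne
  have hle : (insert x C).card ≤ sSup Q := le_csSup bddQ ⟨insert x C, hPins, rfl⟩
  rw [Finset.card_insert_of_notMem hxC, hcard] at hle
  omega

end Net

/-- Operator norm bound for a real diagonal matrix. -/
theorem l2_opNorm_diagonal_le {k : ℕ} (v : Fin k → ℝ) (b : ℝ) (hb : 0 ≤ b)
    (h : ∀ i, |v i| ≤ b) :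
    ‖(Matrix.diagonal (fun i => (v i : ℂ)) : Matrix (Fin k) (Fin k) ℂ)‖ ≤ b := by
  rw [Matrix.l2_opNorm_def]
  refine ContinuousLinearMap.opNorm_le_bound _ hb fun x => ?_
  simp only [LinearEquiv.trans_apply, LinearMap.coe_toContinuousLinearMap']
  rw [Matrix.toEuclideanLin_apply]
  set y : EuclideanSpace ℂ (Fin k) := (WithLp.equiv 2 (Fin k → ℂ)).symm
      ((Matrix.diagonal fun i => (v i : ℂ)) *ᵥ (WithLp.equiv 2 (Fin k → ℂ)) x) with hy
  have hyi : ∀ i, y i = (v i : ℂ) * x i := fun i => by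
    simp [hy, Matrix.mulVec_diagonal]
  rw [EuclideanSpace.norm_eq, EuclideanSpace.norm_eq]
  have key : ∀ i, ‖y i‖ ^ 2 ≤ b ^ 2 * ‖x i‖ ^ 2 := by
    intro i
    rw [hyi i, norm_mul, Complex.norm_real, mul_pow, Real.norm_eq_abs]
    have h1 : |v i| ^ 2 ≤ b ^ 2 := by nlinarith [abs_nonneg (v i), h i]
    nlinarith [sq_nonneg ‖x i‖]
  calc Real.sqrt (∑ i, ‖y i‖ ^ 2) ≤ Real.sqrt (∑ i, b ^ 2 * ‖x i‖ ^ 2) :=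
        Real.sqrt_le_sqrt (Finset.sum_le_sum fun i _ => key i)
    _ = b * Real.sqrt (∑ i, ‖x i‖ ^ 2) := by
        rw [← Finset.mul_sum, Real.sqrt_mul (sq_nonneg b), Real.sqrt_sq hb]

/-- The map `M ↦ Mᴴ D M` is `2‖D‖`-Lipschitz on the unit ball. -/
theorem lip {k d : ℕ} (Dk : Matrix (Fin k) (Fin k) ℂ) (lam1 : ℝ)
    (hD : ‖Dk‖ ≤ lam1) (A B : Matrix (Fin k) (Fin d) ℂ)
    (hA : ‖A‖ ≤ 1) (hB : ‖B‖ ≤ 1) :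
    ‖Aᴴ * Dk * A - Bᴴ * Dk * B‖ ≤ 2 * lam1 * ‖A - B‖ := by
  have hl1 : 0 ≤ lam1 := le_trans (norm_nonneg _) hD
  have key : Aᴴ * Dk * A - Bᴴ * Dk * B = Aᴴ * Dk * (A - B) + (A - B)ᴴ * Dk * B := by
    rw [conjTranspose_sub, Matrix.mul_sub, Matrix.sub_mul, Matrix.sub_mul]
    abel
  have e1 : ‖Aᴴ * Dk * (A - B)‖ ≤ lam1 * ‖A - B‖ := by
    refine le_trans (Matrix.l2_opNorm_mul _ _) ?_
    refine mul_le_mul_of_nonneg_right ?_ (norm_nonneg _)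
    refine le_trans (Matrix.l2_opNorm_mul _ _) ?_
    rw [Matrix.l2_opNorm_conjTranspose]
    nlinarith [norm_nonneg Dk, norm_nonneg A]
  have e2 : ‖(A - B)ᴴ * Dk * B‖ ≤ lam1 * ‖A - B‖ := by
    refine le_trans (Matrix.l2_opNorm_mul _ _) ?_
    have h1 : ‖(A - B)ᴴ * Dk‖ ≤ ‖A - B‖ * lam1 := by
      refine le_trans (Matrix.l2_opNorm_mul _ _) ?_
      rw [Matrix.l2_opNorm_conjTranspose]
      exact mul_le_mul_of_nonneg_left hD (norm_nonneg _)
    calc ‖(A - B)ᴴ * Dk‖ * ‖B‖ ≤ (‖A - B‖ * lam1) * 1 :=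
          mul_le_mul h1 hB (norm_nonneg _) (by positivity)
      _ = lam1 * ‖A - B‖ := by ring
  calc ‖Aᴴ * Dk * A - Bᴴ * Dk * B‖ ≤ ‖Aᴴ * Dk * (A - B)‖ + ‖(A - B)ᴴ * Dk * B‖ := by
        rw [key]; exact norm_add_le _ _
    _ ≤ 2 * lam1 * ‖A - B‖ := by linarith

/-- Every element of the orbit `U Λ Uᴴ` is of the form `Mᴴ D M` with `‖M‖ ≤ 1`. -/
theorem repr_lemma {k d : ℕ} (hk : 0 < k) (hkd : k ≤ d) (lam : Fin k → ℝ)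
    (U : Matrix (Fin d) (Fin d) ℂ) (hU : U ∈ Matrix.unitaryGroup (Fin d) ℂ) :
    ∃ M : Matrix (Fin k) (Fin d) ℂ, ‖M‖ ≤ 1 ∧
      Mᴴ * Matrix.diagonal (fun i => (lam i : ℂ)) * M =
        U * Matrix.diagonal
          (fun i : Fin d => if h : (i : ℕ) < k then (lam ⟨i, h⟩ : ℂ) else 0) * Uᴴ := by
  classical
  set c : Fin k → Fin d := Fin.castLE hkd with hc
  refine ⟨Uᴴ.submatrix c id, ?_, ?_⟩
  · -- norm ≤ 1
    set M : Matrix (Fin k) (Fin d) ℂ := Uᴴ.submatrix c id with hM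
    have hMMH : M * Mᴴ = 1 := by
      rw [hM, conjTranspose_submatrix, conjTranspose_conjTranspose,
        ← Matrix.submatrix_mul _ _ c id c Function.bijective_id,
        show Uᴴ * U = 1 from Matrix.mem_unitaryGroup_iff'.mp hU,
        Matrix.submatrix_one c (Fin.castLE_injective hkd)]
    have h2 := Matrix.l2_opNorm_conjTranspose_mul_self Mᴴ
    rw [conjTranspose_conjTranspose, hMMH] at h2
    haveI : Nonempty (Fin k) := ⟨⟨0, hk⟩⟩
    have hone : ‖(1 : Matrix (Fin k) (Fin k) ℂ)‖ = 1 := by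
      rw [Matrix.cstar_norm_def, _root_.map_one, ContinuousLinearMap.one_def,
        ContinuousLinearMap.norm_id]
    rw [hone] at h2
    have h3 : ‖Mᴴ‖ ≤ 1 := by nlinarith [norm_nonneg Mᴴ]
    rwa [Matrix.l2_opNorm_conjTranspose] at h3
  · -- the product identity
    ext a b
    rw [conjTranspose_submatrix, conjTranspose_conjTranspose]
    rw [Matrix.mul_apply, Matrix.mul_apply]
    have lhs : ∀ i : Fin k, (U.submatrix id c * Matrix.diagonal (fun i => (lam i : ℂ))) a i
        * (Uᴴ.submatrix c id) i b = U a (c i) * (lam i : ℂ) * star (U b (c i)) := by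
      intro i
      rw [Matrix.mul_diagonal]
      simp [Matrix.submatrix_apply, Matrix.conjTranspose_apply]
    have rhs : ∀ j : Fin d, (U * Matrix.diagonal
        (fun i : Fin d => if h : (i : ℕ) < k then (lam ⟨i, h⟩ : ℂ) else 0)) a j * Uᴴ j b
        = U a j * (if h : (j : ℕ) < k then (lam ⟨j, h⟩ : ℂ) else 0) * star (U b j) := by
      intro j
      rw [Matrix.mul_diagonal]
      simp [Matrix.conjTranspose_apply]
    simp only [lhs, rhs]
    rw [show (Finset.univ : Finset (Fin d)) = Finset.univ.image c ∪
        (Finset.univ \ Finset.univ.image c) from (Finset.union_sdiff_of_subset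
          (Finset.subset_univ _)).symm]
    rw [Finset.sum_union (Finset.disjoint_sdiff)]
    have hzero : ∑ j ∈ Finset.univ \ Finset.univ.image c,
        U a j * (if h : (j : ℕ) < k then (lam ⟨j, h⟩ : ℂ) else 0) * star (U b j) = 0 := by
      refine Finset.sum_eq_zero fun j hj => ?_
      rw [Finset.mem_sdiff, Finset.mem_image] at hj
      have : ¬ (j : ℕ) < k := by
        intro hlt
        exact hj.2 ⟨⟨(j : ℕ), hlt⟩, Finset.mem_univ _, by simp [hc, Fin.ext_iff]⟩
      rw [dif_neg this, mul_zero, zero_mul]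
    rw [hzero, add_zero]
    rw [Finset.sum_image (fun x _ y _ h => Fin.castLE_injective hkd h)]
    refine Finset.sum_congr rfl fun i _ => ?_
    have hlt : ((c i : Fin d) : ℕ) < k := by simp [hc]
    rw [dif_pos hlt]
    have heq : (⟨((c i : Fin d) : ℕ), hlt⟩ : Fin k) = i := by
      ext; simp [hc]
    rw [heq]

/-- **Covering number of the unitary orbit.** For `Λ = diag(λ₁,…,λ_k,0,…,0)` with
`λ₁ ≥ ⋯ ≥ λ_k > 0`, the orbit `O_Λ = {UΛU* : U unitary}` admits, for every `ζ > 0`,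
a spectral-norm `ζ`-covering of cardinality at most `(1 + 8λ₁/ζ)^(2dk)`. -/
theorem orbit_covering_number {d k : ℕ} (hk : 0 < k) (hkd : k ≤ d)
    (lam : Fin k → ℝ) (hmono : Antitone lam) (hpos : ∀ i, 0 < lam i)
    (ζ : ℝ) (hζ : 0 < ζ) :
    ∃ C : Finset (Matrix (Fin d) (Fin d) ℂ),
      IsCover (fun X Y => opNorm (X - Y))
        {H | ∃ U ∈ Matrix.unitaryGroup (Fin d) ℂ,
          H = U * Matrix.diagonal
              (fun i : Fin d => if h : (i : ℕ) < k then (lam ⟨i, h⟩ : ℂ) else 0) * Uᴴ}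
        ζ C ∧
      (C.card : ℝ) ≤ (1 + 8 * lam ⟨0, hk⟩ / ζ) ^ (2 * d * k) := by
  classical
  set lam1 := lam ⟨0, hk⟩ with hlam1
  have hl1 : 0 < lam1 := hpos _
  set δ : ℝ := ζ / (4 * lam1) with hδdef
  have hδ : 0 < δ := div_pos hζ (by positivity)
  set Lam : Matrix (Fin d) (Fin d) ℂ := Matrix.diagonal
      (fun i : Fin d => if h : (i : ℕ) < k then (lam ⟨i, h⟩ : ℂ) else 0) with hLam
  set Dk : Matrix (Fin k) (Fin k) ℂ := Matrix.diagonal (fun i => (lam i : ℂ)) with hDk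
  have hDle : ‖Dk‖ ≤ lam1 := by
    rw [hDk]
    refine l2_opNorm_diagonal_le lam lam1 hl1.le fun i => ?_
    rw [abs_of_pos (hpos i)]
    exact hmono (by simp [Fin.le_def])
  set S : Set (Matrix (Fin d) (Fin d) ℂ) :=
    {H | ∃ U ∈ Matrix.unitaryGroup (Fin d) ℂ, H = U * Lam * Uᴴ} with hSdef
  obtain ⟨C0, hC0sub, hC0cov, hC0card⟩ :=
    exists_net (E := Matrix (Fin k) (Fin d) ℂ) δ hδ
  have hS0 : (1 : Matrix (Fin d) (Fin d) ℂ) * Lam * (1 : Matrix (Fin d) (Fin d) ℂ)ᴴ ∈ S :=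
    ⟨1, one_mem _, rfl⟩
  set pick : Matrix (Fin k) (Fin d) ℂ → Matrix (Fin d) (Fin d) ℂ := fun c =>
    if h : ∃ H ∈ S, ‖H - (cᴴ * Dk * c)‖ ≤ 2 * lam1 * δ then h.choose
    else (1 : Matrix (Fin d) (Fin d) ℂ) * Lam * (1 : Matrix (Fin d) (Fin d) ℂ)ᴴ with hpick
  have pick_mem : ∀ c, pick c ∈ S := by
    intro c
    rw [hpick]
    by_cases h : ∃ H ∈ S, ‖H - (cᴴ * Dk * c)‖ ≤ 2 * lam1 * δ
    · simp only [dif_pos h]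
      exact h.choose_spec.1
    · simp only [dif_neg h]
      exact hS0
  have pick_close : ∀ c, (∃ H ∈ S, ‖H - (cᴴ * Dk * c)‖ ≤ 2 * lam1 * δ) →
      ‖pick c - (cᴴ * Dk * c)‖ ≤ 2 * lam1 * δ := by
    intro c h
    rw [hpick]
    simp only [dif_pos h]
    exact h.choose_spec.2
  refine ⟨C0.image pick, ⟨?_, ?_⟩, ?_⟩
  · intro x hx
    simp only [Finset.coe_image, Set.mem_image] at hx
    obtain ⟨c, _, rfl⟩ := hx
    exact pick_mem c
  · intro H hH
    obtain ⟨U, hU, rfl⟩ := hH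
    obtain ⟨M, hMnorm, hMrepr⟩ := repr_lemma hk hkd lam U hU
    rw [← hDk, ← hLam] at hMrepr
    obtain ⟨c, hcC, hcdist⟩ := hC0cov M (by rwa [Metric.mem_closedBall, dist_zero_right])
    have hcnorm : ‖c‖ ≤ 1 := by
      have := hC0sub hcC
      rwa [Metric.mem_closedBall, dist_zero_right] at this
    have hd : ‖M - c‖ ≤ δ := by rwa [dist_eq_norm] at hcdist
    have hflip : ‖U * Lam * Uᴴ - (cᴴ * Dk * c)‖ ≤ 2 * lam1 * δ := by
      rw [← hMrepr]
      calc ‖Mᴴ * Dk * M - cᴴ * Dk * c‖ ≤ 2 * lam1 * ‖M - c‖ :=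
            lip Dk lam1 hDle M c hMnorm hcnorm
        _ ≤ 2 * lam1 * δ := by
            apply mul_le_mul_of_nonneg_left hd
            positivity
    have hex : ∃ H' ∈ S, ‖H' - (cᴴ * Dk * c)‖ ≤ 2 * lam1 * δ :=
      ⟨U * Lam * Uᴴ, ⟨U, hU, rfl⟩, hflip⟩
    refine ⟨pick c, Finset.mem_image_of_mem pick hcC, ?_⟩
    show ‖U * Lam * Uᴴ - pick c‖ ≤ ζ
    have tri : ‖U * Lam * Uᴴ - pick c‖ ≤
        ‖U * Lam * Uᴴ - (cᴴ * Dk * c)‖ + ‖(cᴴ * Dk * c) - pick c‖ :=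
      norm_sub_le_norm_sub_add_norm_sub _ _ _
    have h2 : ‖(cᴴ * Dk * c) - pick c‖ ≤ 2 * lam1 * δ := by
      rw [norm_sub_rev]
      exact pick_close c hex
    have hsum : ‖U * Lam * Uᴴ - pick c‖ ≤ 4 * lam1 * δ := by linarith
    have hζeq : 4 * lam1 * δ = ζ := by
      rw [hδdef]; field_simp
    linarith
  · calc ((C0.image pick).card : ℝ) ≤ (C0.card : ℝ) := by
          exact_mod_cast Finset.card_image_le
      _ ≤ (1 + 2 / δ) ^ finrank ℝ (Matrix (Fin k) (Fin d) ℂ) := hC0card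
      _ = (1 + 8 * lam1 / ζ) ^ (2 * d * k) := by
          rw [show finrank ℝ (Matrix (Fin k) (Fin d) ℂ) = 2 * d * k by
            rw [Module.finrank_matrix, Complex.finrank_real_complex]
            simp [Fintype.card_fin]; ring]
          congr 1
          rw [hδdef]
          field_simp
          ring
end

section
/- Let M₁ and M₂ be d×d positive semidefinite Hermitian matrices whose difference M₁ − M₂ is Hermitian. Then M₁ − M₂ can be written as Σ_{s=1}^{m} x_s x_s* − Σ_{t=1}^{m'} y_t y_t* where all vectors x_s, y_t ∈ ℂ^d have norm at most 1 and m + m′ ≤ ‖M₁ − M₂‖_F² + d. Consequently, if M₁ and M₂ are data matrices built from unit-norm data points, one can transform M₁ into M₂ by replacing at most ‖M₁ − M₂‖_F² + d data points. -/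
open Matrix
open scoped ComplexOrder

/-- The Frobenius norm of a complex matrix. -/
noncomputable def frobNorm {m n : ℕ} (X : Matrix (Fin m) (Fin n) ℂ) : ℝ :=
  Real.sqrt (∑ i, ∑ j, ‖X i j‖ ^ 2)

lemma vecMulVec_real_smul {d : ℕ} (r : ℝ) (v : Fin d → ℂ) :
    vecMulVec ((r:ℂ) • v) (star ((r:ℂ) • v)) = ((r^2 : ℝ) : ℂ) • vecMulVec v (star v) := by
  apply Matrix.ext; intro i k
  simp only [vecMulVec_apply, Pi.smul_apply, Pi.star_apply, smul_eq_mul, Matrix.smul_apply,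
    star_mul', Complex.star_def, Complex.conj_ofReal]
  push_cast; ring

lemma spectral_sum {d : ℕ} (D : Matrix (Fin d) (Fin d) ℂ) (hD : D.IsHermitian) :
    D = ∑ j, (hD.eigenvalues j : ℂ) •
      vecMulVec (hD.eigenvectorBasis j : Fin d → ℂ) (star (hD.eigenvectorBasis j : Fin d → ℂ)) := by
  conv_lhs => rw [hD.spectral_theorem]
  apply Matrix.ext; intro i k
  simp [mul_apply, diagonal, vecMulVec_apply, Finset.sum_apply, Matrix.sum_apply,
    Matrix.smul_apply, Pi.star_apply, IsHermitian.eigenvectorUnitary_apply,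
    conjTranspose_apply, Finset.mul_sum, Finset.sum_mul]
  exact Finset.sum_congr rfl fun j _ => by ring

lemma frob_sq_eq {d : ℕ} (D : Matrix (Fin d) (Fin d) ℂ) (hD : D.IsHermitian) :
    ∑ i, ∑ k, ‖D i k‖ ^ 2 = ∑ j, hD.eigenvalues j ^ 2 := by
  set U := (hD.eigenvectorUnitary : Matrix (Fin d) (Fin d) ℂ) with hU
  set Dg := diagonal (RCLike.ofReal ∘ hD.eigenvalues : Fin d → ℂ) with hDg
  have hu : star U * U = 1 := Unitary.coe_star_mul_self _
  have h1 : Dᴴ * D = U * (Dg * Dg) * star U := by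
    conv_lhs => rw [hD.eq, hD.spectral_theorem]
    calc U * Dg * star U * (U * Dg * star U)
        = U * (Dg * ((star U * U) * Dg)) * star U := by noncomm_ring
      _ = U * (Dg * Dg) * star U := by rw [hu]; noncomm_ring
  have h2 : (Dᴴ * D).trace = ((∑ j, (hD.eigenvalues j)^2 : ℝ) : ℂ) := by
    rw [h1, Matrix.trace_mul_cycle, hu, one_mul, hDg, diagonal_mul_diagonal, trace_diagonal]
    simp [Function.comp, pow_two]
  have h3 : (Dᴴ * D).trace = ((∑ i, ∑ k, ‖D i k‖^2 : ℝ) : ℂ) := by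
    simp only [Matrix.trace, diag_apply, mul_apply, conjTranspose_apply]
    push_cast
    rw [Finset.sum_comm]
    congr 1; ext i; congr 1; ext k
    rw [show star (D i k) = (starRingEnd ℂ) (D i k) from rfl, RCLike.conj_mul]
    norm_cast
  exact_mod_cast h3.symm.trans h2

set_option maxHeartbeats 1000000 in
/-- The difference of two PSD Hermitian matrices `M₁, M₂` can be written as
`Σ_s x_s x_s* − Σ_t y_t y_t*` with all vectors of norm at most `1` and
`m + m′ ≤ ‖M₁ − M₂‖_F² + d`. -/
theorem difference_decomposition {d : ℕ}
    (M₁ M₂ : Matrix (Fin d) (Fin d) ℂ)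
    (h₁ : M₁.PosSemidef) (h₂ : M₂.PosSemidef)
    (hHerm : (M₁ - M₂).IsHermitian) :
    ∃ (m m' : ℕ) (x : Fin m → EuclideanSpace ℂ (Fin d))
      (y : Fin m' → EuclideanSpace ℂ (Fin d)),
      (∀ s, ‖x s‖ ≤ 1) ∧ (∀ t, ‖y t‖ ≤ 1) ∧
      M₁ - M₂ = (∑ s, Matrix.vecMulVec (x s : Fin d → ℂ) (star (x s : Fin d → ℂ)))
        - (∑ t, Matrix.vecMulVec (y t : Fin d → ℂ) (star (y t : Fin d → ℂ))) ∧
      (m + m' : ℝ) ≤ frobNorm (M₁ - M₂) ^ 2 + d := by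
  set D := M₁ - M₂ with hDdef
  set μ : Fin d → ℝ := hHerm.eigenvalues with hμ
  set w : Fin d → EuclideanSpace ℂ (Fin d) := fun j => hHerm.eigenvectorBasis j with hw
  have hwnorm : ∀ j, ‖w j‖ = 1 := fun j => hHerm.eigenvectorBasis.orthonormal.1 j
  set np : Fin d → ℕ := fun j => if 0 < μ j then ⌈μ j⌉₊ else 0 with hnp
  set nn : Fin d → ℕ := fun j => if μ j < 0 then ⌈-μ j⌉₊ else 0 with hnn
  -- the vector families on sigma types
  set fp : ((j : Fin d) × Fin (np j)) → EuclideanSpace ℂ (Fin d) :=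
    fun p => ((Real.sqrt (μ p.1 / np p.1) : ℝ) : ℂ) • w p.1 with hfp
  set fn : ((j : Fin d) × Fin (nn j)) → EuclideanSpace ℂ (Fin d) :=
    fun p => ((Real.sqrt (-μ p.1 / nn p.1) : ℝ) : ℂ) • w p.1 with hfn
  set m := Fintype.card ((j : Fin d) × Fin (np j)) with hm
  set m' := Fintype.card ((j : Fin d) × Fin (nn j)) with hm'
  set ep := Fintype.equivFin ((j : Fin d) × Fin (np j)) with hep
  set en := Fintype.equivFin ((j : Fin d) × Fin (nn j)) with hen
  refine ⟨m, m', fun s => fp (ep.symm s), fun t => fn (en.symm t), ?_, ?_, ?_, ?_⟩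
  · intro s
    set p := ep.symm s
    have hlt : 0 < np p.1 := p.2.pos
    have hpos : 0 < μ p.1 := by by_contra h; simp [hnp, h] at hlt
    have hle : μ p.1 ≤ np p.1 := by
      have : np p.1 = ⌈μ p.1⌉₊ := by simp [hnp, hpos]
      rw [this]; exact Nat.le_ceil _
    have : ‖fp p‖ = |Real.sqrt (μ p.1 / np p.1)| * ‖w p.1‖ := by
      rw [hfp]; simp only [norm_smul, Complex.norm_real, Real.norm_eq_abs]
    rw [this, hwnorm, mul_one, abs_of_nonneg (Real.sqrt_nonneg _)]
    rw [show (1:ℝ) = Real.sqrt 1 by simp]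
    apply Real.sqrt_le_sqrt
    rw [div_le_one (by exact_mod_cast hlt)]
    exact hle
  · intro t
    set p := en.symm t
    have hlt : 0 < nn p.1 := p.2.pos
    have hpos : μ p.1 < 0 := by by_contra h; simp [hnn, h] at hlt
    have hle : -μ p.1 ≤ nn p.1 := by
      have : nn p.1 = ⌈-μ p.1⌉₊ := by simp [hnn, hpos]
      rw [this]; exact Nat.le_ceil _
    have : ‖fn p‖ = |Real.sqrt (-μ p.1 / nn p.1)| * ‖w p.1‖ := by
      rw [hfn]; simp only [norm_smul, Complex.norm_real, Real.norm_eq_abs]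
    rw [this, hwnorm, mul_one, abs_of_nonneg (Real.sqrt_nonneg _)]
    rw [show (1:ℝ) = Real.sqrt 1 by simp]
    apply Real.sqrt_le_sqrt
    rw [div_le_one (by exact_mod_cast hlt)]
    exact hle
  · -- the decomposition
    have key : ∀ j : Fin d,
        (∑ i : Fin (np j), vecMulVec (fp ⟨j, i⟩ : Fin d → ℂ) (star (fp ⟨j, i⟩ : Fin d → ℂ)))
          - (∑ i : Fin (nn j), vecMulVec (fn ⟨j, i⟩ : Fin d → ℂ) (star (fn ⟨j, i⟩ : Fin d → ℂ)))
        = (μ j : ℂ) • vecMulVec (w j : Fin d → ℂ) (star (w j : Fin d → ℂ)) := by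
      intro j
      have hp : ∀ i : Fin (np j),
          vecMulVec (fp ⟨j, i⟩ : Fin d → ℂ) (star (fp ⟨j, i⟩ : Fin d → ℂ))
          = ((Real.sqrt (μ j / np j) ^ 2 : ℝ) : ℂ) •
              vecMulVec (w j : Fin d → ℂ) (star (w j : Fin d → ℂ)) :=
        fun _ => vecMulVec_real_smul _ _
      have hn : ∀ i : Fin (nn j),
          vecMulVec (fn ⟨j, i⟩ : Fin d → ℂ) (star (fn ⟨j, i⟩ : Fin d → ℂ))
          = ((Real.sqrt (-μ j / nn j) ^ 2 : ℝ) : ℂ) •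
              vecMulVec (w j : Fin d → ℂ) (star (w j : Fin d → ℂ)) :=
        fun _ => vecMulVec_real_smul _ _
      rw [Finset.sum_congr rfl (fun i _ => hp i), Finset.sum_congr rfl (fun i _ => hn i),
        Finset.sum_const, Finset.sum_const, Finset.card_univ, Finset.card_univ,
        Fintype.card_fin, Fintype.card_fin, ← Nat.cast_smul_eq_nsmul ℂ,
        ← Nat.cast_smul_eq_nsmul ℂ, smul_smul, smul_smul, ← sub_smul]
      congr 1
      rcases lt_trichotomy (μ j) 0 with hneg | hzero | hpos
      · have hnpz : np j = 0 := by simp [hnp, not_lt.mpr hneg.le, hneg.not_gt]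
        have hnnz : nn j = ⌈-μ j⌉₊ := by simp [hnn, hneg]
        have hne : (nn j : ℝ) ≠ 0 := by
          rw [hnnz]
          exact_mod_cast (Nat.ceil_pos.mpr (by linarith)).ne'
        have hsq : Real.sqrt (-μ j / nn j) ^ 2 = -μ j / nn j :=
          Real.sq_sqrt (div_nonneg (by linarith) (Nat.cast_nonneg _))
        have hneC : ((nn j : ℕ) : ℂ) ≠ 0 := Nat.cast_ne_zero.mpr (by exact_mod_cast hne)
        rw [hnpz, hsq]
        push_cast
        field_simp
        ring
      · have hnpz : np j = 0 := by simp [hnp, hzero]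
        have hnnz : nn j = 0 := by simp [hnn, hzero]
        rw [hnpz, hnnz, hzero]
        push_cast
        ring
      · have hnnz : nn j = 0 := by simp [hnn, not_lt.mpr hpos.le, hpos.not_gt]
        have hnpz : np j = ⌈μ j⌉₊ := by simp [hnp, hpos]
        have hne : (np j : ℝ) ≠ 0 := by
          rw [hnpz]
          exact_mod_cast (Nat.ceil_pos.mpr hpos).ne'
        have hsq : Real.sqrt (μ j / np j) ^ 2 = μ j / np j :=
          Real.sq_sqrt (div_nonneg hpos.le (Nat.cast_nonneg _))
        have hneC : ((np j : ℕ) : ℂ) ≠ 0 := Nat.cast_ne_zero.mpr (by exact_mod_cast hne)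
        rw [hnnz, hsq]
        push_cast
        field_simp
        ring
    rw [Equiv.sum_comp ep.symm (fun p => vecMulVec (fp p : Fin d → ℂ) (star (fp p : Fin d → ℂ))),
        Equiv.sum_comp en.symm (fun p => vecMulVec (fn p : Fin d → ℂ) (star (fn p : Fin d → ℂ))),
        ← Finset.univ_sigma_univ, ← Finset.univ_sigma_univ, Finset.sum_sigma, Finset.sum_sigma,
        ← Finset.sum_sub_distrib]
    exact (spectral_sum D hHerm).trans (Finset.sum_congr rfl fun j _ => (key j).symm)
  · -- the counting bound
    have hfrob : frobNorm D ^ 2 = ∑ j, μ j ^ 2 := by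
      rw [frobNorm, Real.sq_sqrt (by positivity), frob_sq_eq D hHerm]
    have hcard : (m : ℝ) + m' = ∑ j, ((np j : ℝ) + nn j) := by
      rw [hm, hm', Fintype.card_sigma, Fintype.card_sigma]
      push_cast
      rw [Finset.sum_add_distrib]
      simp
    rw [hcard, hfrob]
    have : (d : ℝ) = ∑ _j : Fin d, (1:ℝ) := by simp
    rw [this, ← Finset.sum_add_distrib]
    apply Finset.sum_le_sum
    intro j _
    have key : ∀ a : ℝ, 0 < a → (⌈a⌉₊ : ℝ) ≤ a ^ 2 + 1 := by
      intro a ha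
      rcases le_or_gt a 1 with h | h
      · have : ⌈a⌉₊ ≤ 1 := Nat.ceil_le.mpr (by exact_mod_cast h)
        have : (⌈a⌉₊ : ℝ) ≤ 1 := by exact_mod_cast this
        nlinarith [sq_nonneg a]
      · have := Nat.ceil_lt_add_one ha.le
        nlinarith
    rcases lt_trichotomy (μ j) 0 with hneg | hzero | hpos
    · have : np j = 0 := by simp [hnp, not_lt.mpr hneg.le, hneg.not_gt]
      rw [this]
      have : nn j = ⌈-μ j⌉₊ := by simp [hnn, hneg]
      rw [this]
      have := key (-μ j) (by linarith)
      push_cast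
      nlinarith
    · have h1 : np j = 0 := by simp [hnp, hzero]
      have h2 : nn j = 0 := by simp [hnn, hzero]
      rw [h1, h2]
      push_cast
      nlinarith [sq_nonneg (μ j)]
    · have : nn j = 0 := by simp [hnn, not_lt.mpr hpos.le, hpos.not_gt]
      rw [this]
      have : np j = ⌈μ j⌉₊ := by simp [hnp, hpos]
      rw [this]
      have := key (μ j) hpos
      push_cast
      nlinarith
end

section
/- Let M be a d×d Hermitian matrix with eigenvalues γ₁ ≥ ⋯ ≥ γ_d, let M̃ be the Hermitian matrix with the same eigenvectors as M (in order) but eigenvalues λ₁ ≥ ⋯ ≥ λ_d (i.e., M = UΓU*, M̃ = UΛU* for the same unitary U and Γ = diag(γ), Λ = diag(λ)). Let H be any matrix in the unitary orbit O_Λ of Λ. Then M̃ minimizes ‖M − Z‖_F over Z ∈ O_Λ, and consequently ‖M − H‖_F ≥ (1/2)·max(‖M − M̃‖_F, ‖M̃ − H‖_F). -/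
open Matrix Finset

/-- Key doubly-stochastic rearrangement inequality. -/
lemma ds_key {d : ℕ} (γ lam : Fin d → ℝ) (hγ : Antitone γ) (hlam : Antitone lam)
    (D : Matrix (Fin d) (Fin d) ℝ) (hD : D ∈ doublyStochastic ℝ (Fin d)) :
    ∑ i, ∑ j, γ i * lam j * D i j ≤ ∑ i, γ i * lam i := by
  have hmono : Monovary γ lam := by
    intro i j h
    rcases le_total i j with hij | hij
    · exact absurd (hlam hij) (not_le.2 h)
    · exact hγ hij
  have hlin : IsLinearMap ℝ (fun X : Matrix (Fin d) (Fin d) ℝ =>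
      ∑ i, ∑ j, γ i * lam j * X i j) := by
    constructor
    · intro X Y; simp [mul_add, Finset.sum_add_distrib]
    · intro c X
      simp only [Matrix.smul_apply, smul_eq_mul, Finset.mul_sum]
      congr 1; ext i; congr 1; ext j; ring
  have hconv : Convex ℝ {X : Matrix (Fin d) (Fin d) ℝ |
      (∑ i, ∑ j, γ i * lam j * X i j) ≤ ∑ i, γ i * lam i} :=
    convex_halfSpace_le hlin _
  have hsub : {σ.permMatrix ℝ | σ : Equiv.Perm (Fin d)} ⊆ {X : Matrix (Fin d) (Fin d) ℝ |
      (∑ i, ∑ j, γ i * lam j * X i j) ≤ ∑ i, γ i * lam i} := by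
    rintro X ⟨σ, rfl⟩
    have h1 : ∀ i, ∑ j, γ i * lam j * (σ.permMatrix ℝ) i j = γ i * lam (σ i) := by
      intro i
      rw [Finset.sum_eq_single (σ i)]
      · simp [Equiv.Perm.permMatrix, PEquiv.toMatrix, Equiv.toPEquiv]
      · intro b _ hb
        simp [Equiv.Perm.permMatrix, PEquiv.toMatrix, Equiv.toPEquiv, hb.symm]
      · simp
    simp only [Set.mem_setOf_eq]
    rw [Finset.sum_congr rfl fun i _ => h1 i]
    exact hmono.sum_mul_comp_perm_le_sum_mul
  rw [← SetLike.mem_coe, doublyStochastic_eq_convexHull_permMatrix] at hD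
  exact convexHull_min hsub hconv hD

lemma gsum_eq {d : ℕ} (X : Matrix (Fin d) (Fin d) ℂ) :
    ∑ i, ∑ j, ‖X i j‖ ^ 2 = (Matrix.trace (Xᴴ * X)).re := by
  simp only [Matrix.trace, Matrix.diag, Matrix.mul_apply, Matrix.conjTranspose_apply,
    Complex.re_sum]
  rw [Finset.sum_comm]
  congr 1; ext i; congr 1; ext j
  rw [Complex.star_def, mul_comm, Complex.mul_conj]
  simp [Complex.normSq_eq_norm_sq, ← Complex.ofReal_pow]

lemma trace_unitary_conj {d : ℕ} {U : Matrix (Fin d) (Fin d) ℂ}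
    (h : Uᴴ * U = 1) (X : Matrix (Fin d) (Fin d) ℂ) :
    Matrix.trace (U * X * Uᴴ) = Matrix.trace X := by
  rw [Matrix.trace_mul_cycle, h, Matrix.one_mul]

lemma trace_diag_conj {d : ℕ} (a b : Fin d → ℝ) (Q : Matrix (Fin d) (Fin d) ℂ) :
    (Matrix.trace (Matrix.diagonal (fun i => (a i : ℂ)) * Q *
        Matrix.diagonal (fun i => (b i : ℂ)) * Qᴴ)).re
      = ∑ i, ∑ j, a i * b j * ‖Q i j‖ ^ 2 := by
  have key : ∀ (x y : ℝ) (z : ℂ), ((x : ℂ) * z * (y : ℂ) * star z).re = x * y * ‖z‖ ^ 2 := by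
    intro x y z
    rw [show (x : ℂ) * z * (y : ℂ) * star z = ((x * y : ℝ) : ℂ) * (z * star z) by
      push_cast; ring]
    rw [Complex.star_def, Complex.mul_conj, ← Complex.ofReal_mul, Complex.ofReal_re]
    simp [Complex.normSq_eq_norm_sq]
  have main : ∀ P : Matrix (Fin d) (Fin d) ℂ,
      (∀ i j, P i j = (a i : ℂ) * Q i j * (b j : ℂ)) →
      (Matrix.trace (P * Qᴴ)).re = ∑ i, ∑ j, a i * b j * ‖Q i j‖ ^ 2 := by
    intro P hP
    simp only [Matrix.trace, Matrix.diag, Matrix.mul_apply, Matrix.conjTranspose_apply,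
      Complex.re_sum]
    congr 1; ext i; congr 1; ext j
    rw [hP]
    exact key _ _ _
  apply main
  intro i j
  rw [Matrix.mul_diagonal, Matrix.diagonal_mul]

lemma trace_prod_re {d : ℕ} (a b : Fin d → ℝ) (U W : Matrix (Fin d) (Fin d) ℂ)
    (hU1 : Uᴴ * U = 1) (hU2 : U * Uᴴ = 1) :
    (Matrix.trace ((U * Matrix.diagonal (fun i => (a i : ℂ)) * Uᴴ) *
        (W * Matrix.diagonal (fun i => (b i : ℂ)) * Wᴴ))).re
      = ∑ i, ∑ j, a i * b j * ‖(Uᴴ * W) i j‖ ^ 2 := by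
  have e1 : (U * Matrix.diagonal (fun i => (a i : ℂ)) * Uᴴ) *
      (W * Matrix.diagonal (fun i => (b i : ℂ)) * Wᴴ)
      = U * (Matrix.diagonal (fun i => (a i : ℂ)) * (Uᴴ * W) *
          Matrix.diagonal (fun i => (b i : ℂ)) * (Uᴴ * W)ᴴ) * Uᴴ := by
    simp only [Matrix.conjTranspose_mul, Matrix.conjTranspose_conjTranspose,
      Matrix.mul_assoc, hU2, Matrix.mul_one]
  rw [e1, trace_unitary_conj hU1, trace_diag_conj]

lemma sum_prod_one {d : ℕ} (a b : Fin d → ℝ) :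
    ∑ i, ∑ j, a i * b j * ‖(1 : Matrix (Fin d) (Fin d) ℂ) i j‖ ^ 2 = ∑ i, a i * b i := by
  refine Finset.sum_congr rfl fun i _ => ?_
  rw [Finset.sum_eq_single i]
  · simp [Matrix.one_apply]
  · intro c _ hc; simp [Matrix.one_apply, Ne.symm hc]
  · simp

lemma conj_herm {d : ℕ} (a : Fin d → ℝ) (U : Matrix (Fin d) (Fin d) ℂ) :
    (U * Matrix.diagonal (fun i => (a i : ℂ)) * Uᴴ)ᴴ
      = U * Matrix.diagonal (fun i => (a i : ℂ)) * Uᴴ := by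
  have hst : star (fun i => (a i : ℂ)) = fun i => (a i : ℂ) := by
    funext i; simp [Complex.star_def, Complex.conj_ofReal]
  simp only [Matrix.conjTranspose_mul, Matrix.conjTranspose_conjTranspose,
    Matrix.diagonal_conjTranspose, hst, Matrix.mul_assoc]

lemma gdiff {d : ℕ} (M Z : Matrix (Fin d) (Fin d) ℂ) (hM : Mᴴ = M) (hZ : Zᴴ = Z) :
    ∑ i, ∑ j, ‖(M - Z) i j‖ ^ 2
      = (Matrix.trace (M * M)).re + (Matrix.trace (Z * Z)).re
        - 2 * (Matrix.trace (M * Z)).re := by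
  rw [gsum_eq, Matrix.conjTranspose_sub, hM, hZ, Matrix.sub_mul, Matrix.mul_sub,
    Matrix.mul_sub, Matrix.trace_sub, Matrix.trace_sub, Matrix.trace_sub,
    Matrix.trace_mul_comm Z M]
  simp only [Complex.sub_re]
  ring

attribute [local instance] Matrix.frobeniusNormedAddCommGroup

lemma frobNorm_eq_norm {m n : ℕ} (X : Matrix (Fin m) (Fin n) ℂ) : frobNorm X = ‖X‖ := by
  rw [frobNorm, Matrix.frobenius_norm_def, Real.sqrt_eq_rpow]
  congr 1
  refine Finset.sum_congr rfl fun i _ => Finset.sum_congr rfl fun j _ => ?_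
  rw [← Real.rpow_natCast ‖X i j‖ 2]
  norm_num

lemma hds_aux {d : ℕ} (Q : Matrix (Fin d) (Fin d) ℂ)
    (h1 : Qᴴ * Q = 1) (h2 : Q * Qᴴ = 1) :
    (Matrix.of fun i j => ‖Q i j‖ ^ 2) ∈ doublyStochastic ℝ (Fin d) := by
  have hnorm : ∀ (z : ℂ), (z * star z).re = ‖z‖ ^ 2 := by
    intro z
    rw [Complex.star_def, Complex.mul_conj]
    simp [Complex.normSq_eq_norm_sq, ← Complex.ofReal_pow]
  rw [mem_doublyStochastic_iff_sum]
  refine ⟨fun i j => by simp only [Matrix.of_apply]; positivity, fun i => ?_, fun j => ?_⟩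
  · have h := congrFun (congrFun h2 i) i
    simp only [Matrix.mul_apply, Matrix.conjTranspose_apply, Matrix.one_apply_eq] at h
    have h' := congrArg Complex.re h
    simp only [Complex.re_sum, Complex.one_re] at h'
    simp only [Matrix.of_apply]
    rw [← h']
    exact Finset.sum_congr rfl fun j _ => (hnorm _).symm
  · have h := congrFun (congrFun h1 j) j
    simp only [Matrix.mul_apply, Matrix.conjTranspose_apply, Matrix.one_apply_eq] at h
    have h' := congrArg Complex.re h
    simp only [Complex.re_sum, Complex.one_re] at h'
    simp only [Matrix.of_apply]
    rw [← h']
    refine Finset.sum_congr rfl fun i _ => ?_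
    rw [mul_comm]
    exact (hnorm _).symm

/-- Let `M = UΓU*` with eigenvalues `γ₁ ≥ ⋯ ≥ γ_d`, let `M̃ = UΛU*` have the same
eigenvectors but eigenvalues `λ₁ ≥ ⋯ ≥ λ_d`, and let `H = VΛV*` be any element of the
unitary orbit `O_Λ`. Then `M̃` minimizes `‖M − Z‖_F` over `Z ∈ O_Λ`, and consequently
`‖M − H‖_F ≥ (1/2)·max(‖M − M̃‖_F, ‖M̃ − H‖_F)`. -/
theorem orbit_projection_and_lower_bound {d : ℕ} (γ lam : Fin d → ℝ)
    (hγ : Antitone γ) (hlam : Antitone lam)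
    (U V : Matrix (Fin d) (Fin d) ℂ)
    (hU : U ∈ Matrix.unitaryGroup (Fin d) ℂ)
    (hV : V ∈ Matrix.unitaryGroup (Fin d) ℂ)
    (M Mt H : Matrix (Fin d) (Fin d) ℂ)
    (hM : M = U * Matrix.diagonal (fun i => (γ i : ℂ)) * Uᴴ)
    (hMt : Mt = U * Matrix.diagonal (fun i => (lam i : ℂ)) * Uᴴ)
    (hH : H = V * Matrix.diagonal (fun i => (lam i : ℂ)) * Vᴴ) :
    (∀ Z : Matrix (Fin d) (Fin d) ℂ,
        (∃ W ∈ Matrix.unitaryGroup (Fin d) ℂ,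
          Z = W * Matrix.diagonal (fun i => (lam i : ℂ)) * Wᴴ) →
        frobNorm (M - Mt) ≤ frobNorm (M - Z)) ∧
      (1 / 2) * max (frobNorm (M - Mt)) (frobNorm (Mt - H)) ≤ frobNorm (M - H) := by
  have hU1 : Uᴴ * U = 1 := by
    rw [← Matrix.star_eq_conjTranspose]; exact Matrix.mem_unitaryGroup_iff'.mp hU
  have hU2 : U * Uᴴ = 1 := by
    rw [← Matrix.star_eq_conjTranspose]; exact Matrix.mem_unitaryGroup_iff.mp hU
  subst hM hMt hH
  let A := Matrix.diagonal (fun i => (γ i : ℂ))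
  let B := Matrix.diagonal (fun i => (lam i : ℂ))
  have hA : A = Matrix.diagonal (fun i => (γ i : ℂ)) := rfl
  have hB : B = Matrix.diagonal (fun i => (lam i : ℂ)) := rfl
  -- general expansion of the squared distance
  have hexp : ∀ W : Matrix (Fin d) (Fin d) ℂ, W ∈ Matrix.unitaryGroup (Fin d) ℂ →
      ∑ i, ∑ j, ‖(U * A * Uᴴ - W * B * Wᴴ) i j‖ ^ 2
        = (∑ i, γ i * γ i) + (∑ i, lam i * lam i)
          - 2 * ∑ i, ∑ j, γ i * lam j * ‖(Uᴴ * W) i j‖ ^ 2 := by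
    intro W hW
    have hW1 : Wᴴ * W = 1 := by
      rw [← Matrix.star_eq_conjTranspose]; exact Matrix.mem_unitaryGroup_iff'.mp hW
    have hW2 : W * Wᴴ = 1 := by
      rw [← Matrix.star_eq_conjTranspose]; exact Matrix.mem_unitaryGroup_iff.mp hW
    rw [hA, hB, gdiff _ _ (conj_herm γ U) (conj_herm lam W),
      trace_prod_re γ γ U U hU1 hU2, trace_prod_re lam lam W W hW1 hW2,
      trace_prod_re γ lam U W hU1 hU2, hU1, hW1, sum_prod_one γ γ, sum_prod_one lam lam]
  -- part 1
  have part1 : ∀ Z : Matrix (Fin d) (Fin d) ℂ,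
      (∃ W ∈ Matrix.unitaryGroup (Fin d) ℂ, Z = W * B * Wᴴ) →
      frobNorm (U * A * Uᴴ - U * B * Uᴴ) ≤ frobNorm (U * A * Uᴴ - Z) := by
    rintro Z ⟨W, hW, rfl⟩
    have hW1 : Wᴴ * W = 1 := by
      rw [← Matrix.star_eq_conjTranspose]; exact Matrix.mem_unitaryGroup_iff'.mp hW
    have hW2 : W * Wᴴ = 1 := by
      rw [← Matrix.star_eq_conjTranspose]; exact Matrix.mem_unitaryGroup_iff.mp hW
    have hQ1 : (Uᴴ * W)ᴴ * (Uᴴ * W) = 1 := by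
      rw [Matrix.conjTranspose_mul, Matrix.conjTranspose_conjTranspose, Matrix.mul_assoc,
        ← Matrix.mul_assoc U, hU2, Matrix.one_mul, hW1]
    have hQ2 : (Uᴴ * W) * (Uᴴ * W)ᴴ = 1 := by
      rw [Matrix.conjTranspose_mul, Matrix.conjTranspose_conjTranspose, ← Matrix.mul_assoc,
        Matrix.mul_assoc Uᴴ W Wᴴ, hW2, Matrix.mul_one, hU1]
    have hds := ds_key γ lam hγ hlam _ (hds_aux (Uᴴ * W) hQ1 hQ2)
    simp only [Matrix.of_apply] at hds
    rw [frobNorm, frobNorm]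
    apply Real.sqrt_le_sqrt
    rw [hexp U hU, hexp W hW, hU1, sum_prod_one γ lam]
    linarith
  refine ⟨part1, ?_⟩
  have h1 : frobNorm (U * A * Uᴴ - U * B * Uᴴ) ≤ frobNorm (U * A * Uᴴ - V * B * Vᴴ) :=
    part1 _ ⟨V, hV, rfl⟩
  have h2 : frobNorm (U * B * Uᴴ - V * B * Vᴴ)
      ≤ frobNorm (U * A * Uᴴ - U * B * Uᴴ) + frobNorm (U * A * Uᴴ - V * B * Vᴴ) := by
    simp only [frobNorm_eq_norm]
    calc ‖U * B * Uᴴ - V * B * Vᴴ‖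
        ≤ ‖U * B * Uᴴ - U * A * Uᴴ‖ + ‖U * A * Uᴴ - V * B * Vᴴ‖ :=
          norm_sub_le_norm_sub_add_norm_sub _ _ _
      _ = ‖U * A * Uᴴ - U * B * Uᴴ‖ + ‖U * A * Uᴴ - V * B * Vᴴ‖ := by rw [norm_sub_rev]
  have h0 : 0 ≤ frobNorm (U * A * Uᴴ - U * B * Uᴴ) := Real.sqrt_nonneg _
  have hmax : max (frobNorm (U * A * Uᴴ - U * B * Uᴴ)) (frobNorm (U * B * Uᴴ - V * B * Vᴴ))
      ≤ 2 * frobNorm (U * A * Uᴴ - V * B * Vᴴ) :=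
    max_le (by linarith) (by linarith)
  linarith
end
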